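/- Minimality criterion for ordered homogeneous generators: let the grading given by W be positive, fix shifts δ_1,…,δ_r ∈ ℤ^m, and let g_1,…,g_s ∈ P^r be homogeneous vectors, g_k of degree d_k ∈ ℤ^m, with degrees ordered increasingly: d_1 ≤_Lex d_2 ≤_Lex ⋯ ≤_Lex d_s. Let M = Span_P(g_1,…,g_s). Then {g_1,…,g_s} is a minimal system of generators of M — i.e. g_k ∉ Span_P({g_j : j ≠ k}) for every k — if and only if g_k ∉ Span_P(g_1,…,g_{k−1}) for every k = 1,…,s. -/

import Mathlib

open MvPolynomial

/-- The `W`-degree of an exponent vector `α ∈ ℕ^n`: `W·α = ∑ⱼ αⱼ w⁽ʲ⁾ ∈ ℤ^m`. -/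
def wdeg {m n : ℕ} (W : Matrix (Fin m) (Fin n) ℤ) (α : Fin n →₀ ℕ) : Fin m → ℤ :=
  fun i => ∑ j, (α j : ℤ) * W i j

/-- A polynomial is `W`-homogeneous of degree `d ∈ ℤ^m` if every monomial in its support
has `W`-degree `d`. -/
def IsWHomogeneous {K : Type*} [CommSemiring K] {m n : ℕ} (W : Matrix (Fin m) (Fin n) ℤ)
    (p : MvPolynomial (Fin n) K) (d : Fin m → ℤ) : Prop :=
  ∀ α ∈ p.support, wdeg W α = d

/-- The grading given by `W` is positive: the rows of `W` are `ℤ`-linearly independent,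
no column of `W` is zero, and the first non-zero entry of each column of `W` is positive. -/
def PositiveGrading {m n : ℕ} (W : Matrix (Fin m) (Fin n) ℤ) : Prop :=
  LinearIndependent ℤ (fun i : Fin m => (fun j => W i j : Fin n → ℤ)) ∧
  (∀ j : Fin n, ∃ i : Fin m, W i j ≠ 0) ∧
  (∀ j : Fin n, ∃ i : Fin m, 0 < W i j ∧ ∀ i' < i, W i' j = 0)

/-- A vector `v ∈ P^r` is homogeneous of degree `d ∈ ℤ^m` (with respect to the shifts `δ`)
if each component `v i` is `W`-homogeneous of degree `d - δ i`. -/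
def IsWHomogeneousVec {K : Type*} [CommSemiring K] {m n r : ℕ} (W : Matrix (Fin m) (Fin n) ℤ)
    (δ : Fin r → Fin m → ℤ) (v : Fin r → MvPolynomial (Fin n) K) (d : Fin m → ℤ) : Prop :=
  ∀ i : Fin r, ∀ α ∈ (v i).support, wdeg W α = d - δ i

private instance (priority := 10000) stmt10_wf {k : ℕ} : WellFoundedLT (Fin k) := inferInstance

/-- `wdeg` agrees with `Finsupp.weight` of the columns of `W`. -/
private lemma wdeg_eq_weight {m n : ℕ} (W : Matrix (Fin m) (Fin n) ℤ) (α : Fin n →₀ ℕ) :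
    wdeg W α = Finsupp.weight (fun j => fun i => W i j) α := by
  classical
  funext i
  rw [Finsupp.weight_apply, Finsupp.sum, Finset.sum_apply]
  rw [wdeg]
  rw [← Finset.sum_subset (Finset.subset_univ α.support)]
  · refine Finset.sum_congr rfl fun j _ => ?_
    simp [nsmul_eq_mul]
  · intro j _ hj
    simp [Finsupp.notMem_support_iff.1 hj]

/-- Multiplication by a weighted homogeneous polynomial shifts homogeneous components. -/
private lemma stmt10_wHC_mul {K : Type*} [CommRing K] {σ M : Type*} [AddCommGroup M]
    [DecidableEq M] {w : σ → M} {q : MvPolynomial σ K} {c : M}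
    (hq : q.IsWeightedHomogeneous w c) (p : MvPolynomial σ K) (e : M) :
    weightedHomogeneousComponent w e (p * q)
      = weightedHomogeneousComponent w (e - c) p * q := by
  classical
  have hfin := weightedHomogeneousComponent_finsupp (w := w) p
  have hp : p = ∑ u ∈ hfin.toFinset, weightedHomogeneousComponent w u p := by
    rw [← finsum_eq_sum _ hfin, sum_weightedHomogeneousComponent]
  calc weightedHomogeneousComponent w e (p * q)
      = ∑ u ∈ hfin.toFinset, weightedHomogeneousComponent w e
          (weightedHomogeneousComponent w u p * q) := by
        conv_lhs => rw [hp, Finset.sum_mul, map_sum]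
    _ = ∑ u ∈ hfin.toFinset,
          if u = e - c then weightedHomogeneousComponent w u p * q else 0 := by
        refine Finset.sum_congr rfl fun u _ => ?_
        have h1 : (weightedHomogeneousComponent w u p * q).IsWeightedHomogeneous w (u + c) :=
          (weightedHomogeneousComponent_isWeightedHomogeneous u p).mul hq
        by_cases hu : u = e - c
        · rw [if_pos hu]
          subst hu
          have : e - c + c = e := by abel
          rw [this] at h1
          exact h1.weightedHomogeneousComponent_same
        · rw [if_neg hu]
          exact h1.weightedHomogeneousComponent_ne e (fun h => hu (by rw [h]; abel))
    _ = weightedHomogeneousComponent w (e - c) p * q := by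
        rw [Finset.sum_ite_eq' hfin.toFinset (e - c)
          (fun u => weightedHomogeneousComponent w u p * q)]
        split_ifs with h
        · rfl
        · have : weightedHomogeneousComponent w (e - c) p = 0 := by
            by_contra h'
            exact h (hfin.mem_toFinset.2 h')
          rw [this, zero_mul]

/-- In a positive grading, a nonzero weighted homogeneous polynomial of Lex-nonpositive
degree is a nonzero constant. -/
private lemma stmt10_homog_const {K : Type*} [Field K] {m n : ℕ} {W : Matrix (Fin m) (Fin n) ℤ}
    (hWp : ∀ j : Fin n, ∃ i : Fin m, 0 < W i j ∧ ∀ i' < i, W i' j = 0)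
    {q : MvPolynomial (Fin n) K} {c : Fin m → ℤ}
    (hq : q.IsWeightedHomogeneous (fun j => fun i => W i j) c)
    (hq0 : q ≠ 0) (hc : toLex c ≤ 0) : ∃ t : K, t ≠ 0 ∧ q = MvPolynomial.C t := by
  classical
  set w : Fin n → (Fin m → ℤ) := fun j => fun i => W i j with hw
  have hwpos : ∀ j, (0 : Lex (Fin m → ℤ)) < toLex (w j) := by
    intro j
    obtain ⟨i, h1, h2⟩ := hWp j
    exact ⟨i, fun i' hi' => (h2 i' hi').symm, h1⟩
  -- every exponent in the support is zero
  have key : ∀ α : Fin n →₀ ℕ, coeff α q ≠ 0 → α = 0 := by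
    intro α hα
    by_contra hα0
    have hwei : Finsupp.weight w α = c := hq hα
    have hsum : toLex (Finsupp.weight w α)
        = ∑ j ∈ α.support, (α j) • toLex (w j) := by
      rw [Finsupp.weight_apply, Finsupp.sum]
      rfl
    have hpos : (0 : Lex (Fin m → ℤ)) < ∑ j ∈ α.support, (α j) • toLex (w j) := by
      obtain ⟨j0, hj0⟩ : α.support.Nonempty := Finsupp.support_nonempty_iff.2 hα0
      refine Finset.sum_pos' (fun j _ => nsmul_nonneg (hwpos j).le _) ⟨j0, hj0, ?_⟩
      exact nsmul_pos (hwpos j0) (Finsupp.mem_support_iff.1 hj0)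
    rw [← hsum, hwei] at hpos
    exact absurd (hpos.trans_le hc) (lt_irrefl _)
  have hqC : q = MvPolynomial.C (coeff 0 q) := by
    ext β
    rcases eq_or_ne β 0 with hβ | hβ
    · subst hβ
      simp
    · have h1 : coeff β q = 0 := by
        by_contra h'
        exact hβ (key β h')
      rw [h1, coeff_C, if_neg (fun h => hβ h.symm)]
  refine ⟨coeff 0 q, ?_, hqC⟩
  intro h
  apply hq0
  rw [hqC, h, map_zero]

/-- Minimality criterion for ordered homogeneous generators: for homogeneous vectors
`g_1,…,g_s ∈ P^r` with `Lex`-increasing degrees, `{g_1,…,g_s}` is a minimal system of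
generators of `M = Span_P(g_1,…,g_s)` — no `g_k` lies in the span of the others — if and
only if `g_k ∉ Span_P(g_1,…,g_(k−1))` for every `k`. -/
theorem stmt_10 {K : Type*} [Field K] {m n r s : ℕ} (W : Matrix (Fin m) (Fin n) ℤ)
    (hW : PositiveGrading W) (δ : Fin r → Fin m → ℤ)
    (g : Fin s → (Fin r → MvPolynomial (Fin n) K)) (d : Fin s → Fin m → ℤ)
    (hgh : ∀ k, IsWHomogeneousVec W δ (g k) (d k))
    (hord : ∀ j k : Fin s, j ≤ k → toLex (d j) ≤ toLex (d k)) :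
    (∀ k : Fin s, g k ∉ Submodule.span (MvPolynomial (Fin n) K) (g '' {j | j ≠ k})) ↔
      (∀ k : Fin s, g k ∉ Submodule.span (MvPolynomial (Fin n) K) (g '' {j | j < k})) := by
  classical
  set w : Fin n → (Fin m → ℤ) := fun j => fun i => W i j with hwdef
  -- homogeneity in terms of `Finsupp.weight`
  have hghw : ∀ (k : Fin s) (i : Fin r),
      (g k i).IsWeightedHomogeneous w (d k - δ i) := by
    intro k i α hα
    rw [← wdeg_eq_weight]
    exact hgh k i α (mem_support_iff.2 hα)
  constructor
  · intro H k hk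
    exact H k (Submodule.span_mono
      (Set.image_mono (fun j (hj : j < k) => ne_of_lt hj)) hk)
  · intro H k hk
    rw [Finsupp.mem_span_image_iff_linearCombination] at hk
    obtain ⟨l, hl, hlk⟩ := hk
    have hlne : ∀ j ∈ l.support, j ≠ k := fun j hj =>
      (Finsupp.mem_supported _ l).1 hl hj
    rw [Finsupp.linearCombination_apply, Finsupp.sum] at hlk
    -- take the degree-`d k` homogeneous component
    set q : Fin s → MvPolynomial (Fin n) K := fun j => weightedHomogeneousComponent w (d k - d j) (l j) with hqdef
    have hqhom : ∀ j, (q j).IsWeightedHomogeneous w (d k - d j) := fun j =>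
      weightedHomogeneousComponent_isWeightedHomogeneous _ _
    have hkey : g k = ∑ j ∈ l.support, q j • g j := by
      funext i
      have step : weightedHomogeneousComponent w (d k - δ i) (g k i) = g k i :=
        (hghw k i).weightedHomogeneousComponent_same
      calc g k i = weightedHomogeneousComponent w (d k - δ i) (g k i) := step.symm
        _ = weightedHomogeneousComponent w (d k - δ i)
              ((∑ j ∈ l.support, l j • g j) i) := by rw [hlk]
        _ = weightedHomogeneousComponent w (d k - δ i)
              (∑ j ∈ l.support, l j * g j i) := by
            rw [Finset.sum_apply]
            rfl
        _ = ∑ j ∈ l.support, weightedHomogeneousComponent w (d k - δ i)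
              (l j * g j i) := map_sum _ _ _
        _ = ∑ j ∈ l.support, q j * g j i := by
            refine Finset.sum_congr rfl fun j _ => ?_
            rw [stmt10_wHC_mul (hghw j i) (l j) (d k - δ i)]
            congr 1
            rw [hqdef]
            congr 1
            abel
        _ = (∑ j ∈ l.support, q j • g j) i := by
            rw [Finset.sum_apply]
            rfl
    set F : Finset (Fin s) := l.support.filter (fun j => k < j ∧ q j ≠ 0) with hFdef
    by_cases hF : F.Nonempty
    · -- contradict minimality at the largest such index
      set j0 := F.max' hF with hj0def
      have hj0F : j0 ∈ F := F.max'_mem hF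
      rw [hFdef, Finset.mem_filter] at hj0F
      obtain ⟨hj0sup, hkj0, hqj0⟩ := hj0F
      -- q j0 is a nonzero constant
      have hc : toLex (d k - d j0) ≤ 0 := by
        have := hord k j0 hkj0.le
        exact sub_nonpos.2 this
      obtain ⟨t, ht0, htq⟩ := stmt10_homog_const hW.2.2 (hqhom j0) hqj0 hc
      apply H j0
      have h2 : q j0 • g j0 = g k - ∑ j ∈ l.support.erase j0, q j • g j := by
        rw [hkey, ← Finset.add_sum_erase _ _ hj0sup]
        exact (add_sub_cancel_right _ _).symm
      have h3 : g j0 = (MvPolynomial.C t⁻¹ : MvPolynomial (Fin n) K) •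
          (g k - ∑ j ∈ l.support.erase j0, q j • g j) := by
        rw [← h2, htq, smul_smul, ← MvPolynomial.C_mul, inv_mul_cancel₀ ht0,
          MvPolynomial.C_1, one_smul]
      rw [h3]
      refine Submodule.smul_mem _ _ (Submodule.sub_mem _ ?_ ?_)
      · exact Submodule.subset_span ⟨k, hkj0, rfl⟩
      · refine Submodule.sum_mem _ fun j hj => ?_
        have hjj0 : j ≠ j0 := (Finset.mem_erase.1 hj).1
        have hjsup : j ∈ l.support := (Finset.mem_erase.1 hj).2
        by_cases hqj : q j = 0
        · simp [hqj]
        · have hjlt : j < j0 := by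
            rcases (hlne j hjsup).lt_or_gt with hjk | hkj
            · exact hjk.trans hkj0
            · have : j ∈ F := by
                rw [hFdef, Finset.mem_filter]
                exact ⟨hjsup, hkj, hqj⟩
              exact lt_of_le_of_ne (F.le_max' j this) hjj0
          exact Submodule.smul_mem _ _ (Submodule.subset_span ⟨j, hjlt, rfl⟩)
    · -- all coefficients at indices > k vanish, contradict H k
      apply H k
      rw [hkey]
      refine Submodule.sum_mem _ fun j hj => ?_
      rcases (hlne j hj).lt_or_gt with hjk | hkj
      · exact Submodule.smul_mem _ _ (Submodule.subset_span ⟨j, hjk, rfl⟩)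
      · have hqj : q j = 0 := by
          by_contra hqj
          exact hF ⟨j, by rw [hFdef, Finset.mem_filter]; exact ⟨hj, hkj, hqj⟩⟩
        simp [hqj]
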